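/- Suppose the equation x'(t) = L(t)x_t admits an exponential dichotomy with projections P(t) and all its solutions are bounded on [s−r,∞) for every initial time s. Then Q(s) = Id − P(s) = 0 for all s ≥ 0, and hence the dichotomy is an exponential contraction: ‖T(t,s)‖ ≤ De^{−λ(t−s)} for all t ≥ s ≥ 0. -/

import Mathlib

open Set

noncomputable section

/-- The Euclidean state space ℝ^d. -/
abbrev Rd (d : ℕ) : Type := EuclideanSpace ℝ (Fin d)

/-- The phase space C = C([-r,0], ℝ^d) with the supremum norm. -/
abbrev Ph (d : ℕ) (r : ℝ) : Type := C(Set.Icc (-r) (0:ℝ), Rd d)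

/-- The segment x_t ∈ C of a continuous function x : ℝ → ℝ^d, x_t(θ) = x(t+θ). -/
def seg (d : ℕ) (r : ℝ) (x : ℝ → Rd d) (hx : Continuous x) (t : ℝ) : Ph d r :=
  ⟨fun θ => x (t + θ.1), hx.comp (continuous_const.add continuous_subtype_val)⟩

/-- `x` is a solution of x'(t) = L(t)x_t on [s, ∞) (right-hand derivative at s). -/
def IsSol (d : ℕ) (r : ℝ) (L : ℝ → (Ph d r →L[ℝ] Rd d)) (s : ℝ)
    (x : ℝ → Rd d) (hx : Continuous x) : Prop :=
  ∀ t, s ≤ t → HasDerivWithinAt x (L t (seg d r x hx t)) (Set.Ici s) t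

/-- `T` is the solution operator family of x'(t) = L(t)x_t :
for every s ≥ 0 and φ ∈ C there is a solution x on [s,∞) with x_s = φ and x_t = T(t,s)φ. -/
def IsSolOp (d : ℕ) (r : ℝ) (L : ℝ → (Ph d r →L[ℝ] Rd d))
    (T : ℝ → ℝ → (Ph d r →L[ℝ] Ph d r)) : Prop :=
  ∀ s, 0 ≤ s → ∀ φ : Ph d r, ∃ (x : ℝ → Rd d) (hx : Continuous x),
    IsSol d r L s x hx ∧ seg d r x hx s = φ ∧ ∀ t, s ≤ t → seg d r x hx t = T t s φ

/-- The evolution family property of the solution operators. -/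
def Cocycle (d : ℕ) (r : ℝ) (T : ℝ → ℝ → (Ph d r →L[ℝ] Ph d r)) : Prop :=
  (∀ s, 0 ≤ s → T s s = ContinuousLinearMap.id ℝ (Ph d r)) ∧
  ∀ τ t s, 0 ≤ s → s ≤ t → t ≤ τ → T τ s = (T τ t).comp (T t s)

/-- Uniqueness of solutions with a given initial segment at time s. -/
def UniqueSol (d : ℕ) (r : ℝ) (L : ℝ → (Ph d r →L[ℝ] Rd d)) : Prop :=
  ∀ s, 0 ≤ s → ∀ (x y : ℝ → Rd d) (hx : Continuous x) (hy : Continuous y),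
    IsSol d r L s x hx → IsSol d r L s y hy → seg d r x hx s = seg d r y hy s →
    ∀ t, s - r ≤ t → x t = y t

/-- Eq. x'(t) = L(t)x_t is shadowable. -/
def Shadowable (d : ℕ) (r : ℝ) (L : ℝ → (Ph d r →L[ℝ] Rd d)) : Prop :=
  ∀ ε, 0 < ε → ∃ δ, 0 < δ ∧ ∀ (y yd : ℝ → Rd d) (hy : Continuous y),
    ContinuousOn yd (Set.Ici 0) →
    (∀ t, 0 ≤ t → HasDerivWithinAt y (yd t) (Set.Ici 0) t) →
    (∀ t, 0 ≤ t → ‖yd t - L t (seg d r y hy t)‖ ≤ δ) →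
    ∃ (x : ℝ → Rd d) (hx : Continuous x), IsSol d r L 0 x hx ∧
      ∀ t, 0 ≤ t → ‖seg d r x hx t - seg d r y hy t‖ ≤ ε

/-- Eq. x'(t) = L(t)x_t is Hyers–Ulam stable. -/
def HyersUlam (d : ℕ) (r : ℝ) (L : ℝ → (Ph d r →L[ℝ] Rd d)) : Prop :=
  ∃ κ, 0 < κ ∧ ∀ δ, 0 < δ → ∀ (y yd : ℝ → Rd d) (hy : Continuous y),
    ContinuousOn yd (Set.Ici 0) →
    (∀ t, 0 ≤ t → HasDerivWithinAt y (yd t) (Set.Ici 0) t) →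
    (∀ t, 0 ≤ t → ‖yd t - L t (seg d r y hy t)‖ ≤ δ) →
    ∃ (x : ℝ → Rd d) (hx : Continuous x), IsSol d r L 0 x hx ∧
      ∀ t, 0 ≤ t → ‖seg d r x hx t - seg d r y hy t‖ ≤ κ * δ

/-- The stable subspace 𝒮(s) = {φ ∈ C : sup_{t ≥ s} ‖T(t,s)φ‖ < ∞}. -/
def stableSub (d : ℕ) (r : ℝ) (T : ℝ → ℝ → (Ph d r →L[ℝ] Ph d r)) (s : ℝ) :
    Submodule ℝ (Ph d r) where
  carrier := {φ | ∃ M, ∀ t, s ≤ t → ‖T t s φ‖ ≤ M}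
  add_mem' := by
    rintro a b ⟨Ma, hMa⟩ ⟨Mb, hMb⟩
    refine ⟨Ma + Mb, fun t ht => ?_⟩
    calc ‖T t s (a + b)‖ = ‖T t s a + T t s b‖ := by rw [map_add]
    _ ≤ ‖T t s a‖ + ‖T t s b‖ := norm_add_le _ _
    _ ≤ Ma + Mb := add_le_add (hMa t ht) (hMb t ht)
  zero_mem' := ⟨0, fun t ht => by simp⟩
  smul_mem' := by
    rintro c a ⟨Ma, hMa⟩
    refine ⟨‖c‖ * Ma, fun t ht => ?_⟩
    rw [map_smul]
    have h1 : ‖c • (T t s) a‖ = ‖c‖ * ‖(T t s) a‖ := @norm_smul ℝ (Ph d r) _ _ _ _ c _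
    rw [h1]
    exact mul_le_mul_of_nonneg_left (hMa t ht) (norm_nonneg c)

/-- Eq. x'(t) = L(t)x_t admits an exponential dichotomy (with solution operators T). -/
def ExpDich (d : ℕ) (r : ℝ) (T : ℝ → ℝ → (Ph d r →L[ℝ] Ph d r)) : Prop :=
  ∃ (P : ℝ → (Ph d r →L[ℝ] Ph d r)) (D lam : ℝ), 0 < D ∧ 0 < lam ∧
    (∀ t, 0 ≤ t → (P t).comp (P t) = P t) ∧
    (∀ t s, 0 ≤ s → s ≤ t → (P t).comp (T t s) = (T t s).comp (P s)) ∧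
    (∀ t s, 0 ≤ s → s ≤ t →
      Set.BijOn (⇑(T t s)) (LinearMap.ker (P s : Ph d r →ₗ[ℝ] Ph d r) : Set (Ph d r))
        (LinearMap.ker (P t : Ph d r →ₗ[ℝ] Ph d r) : Set (Ph d r))) ∧
    (∀ t s, 0 ≤ s → s ≤ t → ‖(T t s).comp (P s)‖ ≤ D * Real.exp (-lam * (t - s))) ∧
    (∀ t s, 0 ≤ t → t ≤ s → ∀ φ ∈ LinearMap.ker (P t : Ph d r →ₗ[ℝ] Ph d r),
      ‖φ‖ ≤ D * Real.exp (-lam * (s - t)) * ‖T s t φ‖)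

/-- If Eq. x'(t) = L(t)x_t admits an exponential dichotomy with projections
P(t) and all its solutions are bounded, then Q(s) = Id − P(s) = 0 for all
s ≥ 0 and the dichotomy is an exponential contraction. -/
theorem stmt16 (d : ℕ) (r : ℝ) (hr : 0 ≤ r)
    (L : ℝ → (Ph d r →L[ℝ] Rd d)) (hL : ContinuousOn L (Set.Ici 0))
    (T : ℝ → ℝ → (Ph d r →L[ℝ] Ph d r))
    (hT : IsSolOp d r L T) (hcoc : Cocycle d r T)
    (P : ℝ → (Ph d r →L[ℝ] Ph d r)) (D lam : ℝ) (hD : 0 < D) (hlam : 0 < lam)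
    (hproj : ∀ t, 0 ≤ t → (P t).comp (P t) = P t)
    (hcomm : ∀ t s, 0 ≤ s → s ≤ t → (P t).comp (T t s) = (T t s).comp (P s))
    (hbij : ∀ t s, 0 ≤ s → s ≤ t →
      Set.BijOn (⇑(T t s)) (LinearMap.ker (P s : Ph d r →ₗ[ℝ] Ph d r) : Set (Ph d r))
        (LinearMap.ker (P t : Ph d r →ₗ[ℝ] Ph d r) : Set (Ph d r)))
    (hstab : ∀ t s, 0 ≤ s → s ≤ t → ‖(T t s).comp (P s)‖ ≤ D * Real.exp (-lam * (t - s)))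
    (hunst : ∀ t s, 0 ≤ t → t ≤ s → ∀ φ ∈ LinearMap.ker (P t : Ph d r →ₗ[ℝ] Ph d r),
      ‖φ‖ ≤ D * Real.exp (-lam * (s - t)) * ‖T s t φ‖)
    (hbdd : ∀ s, 0 ≤ s → ∀ φ : Ph d r, ∃ B, ∀ t, s ≤ t → ‖T t s φ‖ ≤ B) :
    (∀ s, 0 ≤ s → P s = ContinuousLinearMap.id ℝ (Ph d r)) ∧
    (∀ t s, 0 ≤ s → s ≤ t → ‖T t s‖ ≤ D * Real.exp (-lam * (t - s))) := by

  have key : ∀ s, 0 ≤ s → P s = ContinuousLinearMap.id ℝ (Ph d r) := by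
    intro s hs
    refine ContinuousLinearMap.ext fun φ => ?_
    have hker : φ - P s φ ∈ LinearMap.ker (P s : Ph d r →ₗ[ℝ] Ph d r) := by
      have h := congrArg (fun (A : Ph d r →L[ℝ] Ph d r) => A φ) (hproj s hs)
      simp only [ContinuousLinearMap.comp_apply] at h
      simp [LinearMap.mem_ker, map_sub, h]
    set ψ := φ - P s φ with hψ
    obtain ⟨B, hB⟩ := hbdd s hs ψ
    have hB' : ∀ t, s ≤ t → ‖T t s ψ‖ ≤ max B 1 := fun t ht =>
      (hB t ht).trans (le_max_left _ _)
    have hψ0 : ψ = 0 := by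
      by_contra hne
      have hpos : 0 < ‖ψ‖ := norm_pos_iff.mpr hne
      have htend : Filter.Tendsto (fun t : ℝ => D * Real.exp (-lam * (t - s)) * max B 1)
          Filter.atTop (nhds 0) := by
        have h1 : Filter.Tendsto (fun t : ℝ => -lam * (t - s)) Filter.atTop Filter.atBot :=
          (Filter.tendsto_const_mul_atBot_of_neg (neg_neg_iff_pos.mpr hlam)).mpr
            (Filter.tendsto_atTop_add_const_right _ (-s) Filter.tendsto_id)
        have h2 : Filter.Tendsto (fun t : ℝ => Real.exp (-lam * (t - s)))
            Filter.atTop (nhds 0) := Real.tendsto_exp_atBot.comp h1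
        have h3 := (h2.const_mul D).mul_const (max B 1)
        simpa using h3
      have hev : ∀ᶠ t in Filter.atTop,
          D * Real.exp (-lam * (t - s)) * max B 1 < ‖ψ‖ :=
        htend.eventually_lt_const hpos
      obtain ⟨t, hlt, hts⟩ := (hev.and (Filter.eventually_ge_atTop s)).exists
      have hu := hunst s t hs hts ψ hker
      have : ‖ψ‖ ≤ D * Real.exp (-lam * (t - s)) * max B 1 := by
        calc ‖ψ‖ ≤ D * Real.exp (-lam * (t - s)) * ‖T t s ψ‖ := hu
        _ ≤ D * Real.exp (-lam * (t - s)) * max B 1 :=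
          mul_le_mul_of_nonneg_left (hB' t hts)
            (mul_nonneg hD.le (Real.exp_pos _).le)
      exact absurd this (not_le.mpr hlt)
    have : P s φ = φ := by
      have := sub_eq_zero.mp hψ0
      simpa using this.symm
    simpa using this
  refine ⟨key, fun t s hs hst => ?_⟩
  have := hstab t s hs hst
  rwa [key s hs, ContinuousLinearMap.comp_id] at this

end
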